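/- With Γ ⊂ ℝⁿ a nonempty compact C¹-smooth embedded submanifold of dimension k (1 ≤ k ≤ n−1), ρ > 0 satisfying δ(p, r) > r/2 for all p ∈ Γ and 0 < r < 2ρ, and W ⊂ ℝ^{n+1} defined as below: if {(x_i, y_i)} is a sequence of points of W such that y_i → 0+ as i → ∞, then d(x_i)/y_i → 0, where d(x) = dist(x, Γ) is the Euclidean distance from x to Γ in ℝⁿ. -/

import Mathlib

open Metric Set Filter
open scoped RealInnerProductSpace Topology

noncomputable section

/-- `ℝⁿ` as a Euclidean space. -/
abbrev En (n : ℕ) : Type := EuclideanSpace ℝ (Fin n)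

/-- `ℝ^{n+1}` identified with `ℝⁿ × ℝ`, with the Euclidean (L²) norm. -/
abbrev En1 (n : ℕ) : Type := WithLp 2 (En n × ℝ)

/-- The identification of the plain product `ℝⁿ × ℝ` with the L²-product. -/
def emb1 (n : ℕ) : En n × ℝ → En1 n := (WithLp.equiv 2 (En n × ℝ)).symm

/-- First (ℝⁿ) coordinate of a point of `ℝ^{n+1} = ℝⁿ × ℝ`. -/
def fst1 (n : ℕ) (q : En1 n) : En n := ((WithLp.equiv 2 (En n × ℝ)) q).1

/-- Second (ℝ) coordinate of a point of `ℝ^{n+1} = ℝⁿ × ℝ`. -/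
def snd1 (n : ℕ) (q : En1 n) : ℝ := ((WithLp.equiv 2 (En n × ℝ)) q).2

/-- The (Federer) tangent cone of a set `S` at a point `p`: all vectors `w` for which
there are sequences `q i ∈ S` and `c i > 0` with `q i → p` and `c i • (q i − p) → w`. -/
def fTan {E : Type*} [NormedAddCommGroup E] [NormedSpace ℝ E] (S : Set E) (p : E) : Set E :=
  {w | ∃ (q : ℕ → E) (c : ℕ → ℝ), (∀ i, q i ∈ S) ∧ (∀ i, 0 < c i) ∧
    Filter.Tendsto q Filter.atTop (nhds p) ∧
    Filter.Tendsto (fun i => c i • (q i - p)) Filter.atTop (nhds w)}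

/-- A unit normal to `Γ` at `p`: a unit vector orthogonal to the tangent space
(= tangent cone, for a C¹ submanifold) of `Γ` at `p`. -/
def IsUnitNormal {n : ℕ} (Γ : Set (En n)) (p ν : En n) : Prop :=
  ‖ν‖ = 1 ∧ ∀ w ∈ fTan Γ p, inner ℝ ν w = (0 : ℝ)

/-- `δ(p, r) = inf_ν dist(p + rν, Γ)`, the infimum over all unit normals `ν` to `Γ` at `p`. -/
def deltaG {n : ℕ} (Γ : Set (En n)) (p : En n) (r : ℝ) : ℝ :=
  sInf {d : ℝ | ∃ ν : En n, IsUnitNormal Γ p ν ∧ d = Metric.infDist (p + r • ν) Γ}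

/-- `Γ ⊆ ℝⁿ` is a C¹-smooth embedded submanifold of dimension `k`: near each of its points
it is the regular zero level set of a C¹ map into `ℝ^{n-k}`. -/
def IsC1Submanifold {n : ℕ} (k : ℕ) (Γ : Set (En n)) : Prop :=
  ∀ p ∈ Γ, ∃ (V : Set (En n)) (f : En n → EuclideanSpace ℝ (Fin (n - k))),
    IsOpen V ∧ p ∈ V ∧ ContDiffOn ℝ 1 f V ∧
    Γ ∩ V = {y ∈ V | f y = 0} ∧
    ∀ y ∈ V, Function.Surjective ⇑(fderivWithin ℝ f V y)

/-- The set `W = (ℝⁿ × (0, ρ)) \ ( ⋃_{d(x) > 2ρ} B_{2ρ}((x,0)) ∪ ⋃_{d(x) ≤ 2ρ} B_{d(x)}((x,0)) )`,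
where `d(x) = dist(x, Γ)`. -/
def Wset {n : ℕ} (Γ : Set (En n)) (ρ : ℝ) : Set (En1 n) :=
  {q : En1 n | 0 < snd1 n q ∧ snd1 n q < ρ} \
    ((⋃ x ∈ {x : En n | 2 * ρ < Metric.infDist x Γ}, Metric.ball (emb1 n (x, 0)) (2 * ρ)) ∪
     (⋃ x ∈ {x : En n | Metric.infDist x Γ ≤ 2 * ρ},
        Metric.ball (emb1 n (x, 0)) (Metric.infDist x Γ)))

section Aux

lemma nearest_inner_le {E : Type*} [NormedAddCommGroup E] [InnerProductSpace ℝ E]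
    {Γ : Set E} {x p q : E} (hq : q ∈ Γ) (hd : Metric.infDist x Γ = dist x p) :
    ⟪x - p, q - p⟫ ≤ ‖q - p‖ ^ 2 / 2 := by
  have h1 : dist x p ≤ dist x q := hd ▸ Metric.infDist_le_dist_of_mem hq
  have h2 : ‖x - p‖ ^ 2 ≤ ‖x - q‖ ^ 2 := by
    rw [← dist_eq_norm, ← dist_eq_norm]
    exact pow_le_pow_left₀ dist_nonneg h1 2
  have h3 : x - q = x - p - (q - p) := by abel
  rw [h3, norm_sub_sq_real (x - p) (q - p)] at h2
  nlinarith

set_option maxHeartbeats 1000000 in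
/-- At a nearest point `p` of `Γ` to `x`, the vector `x - p` is orthogonal to the kernel of the
derivative of a defining function of `Γ`. -/
lemma nearest_orth_ker {n m : ℕ} {Γ : Set (En n)} {V : Set (En n)}
    {f : En n → EuclideanSpace ℝ (Fin m)}
    (hV : IsOpen V) (hf : ContDiffOn ℝ 1 f V)
    (hΓV : Γ ∩ V = {y ∈ V | f y = 0})
    {p : En n} (hpΓ : p ∈ Γ) (hpV : p ∈ V)
    (hsurj : Function.Surjective ⇑(fderivWithin ℝ f V p))
    {x : En n} (hd : Metric.infDist x Γ = dist x p)
    {v : En n} (hv : fderiv ℝ f p v = 0) :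
    ⟪x - p, v⟫ = 0 := by
  have hfd : fderivWithin ℝ f V p = fderiv ℝ f p := fderivWithin_of_isOpen hV hpV
  rw [hfd] at hsurj
  set f' := fderiv ℝ f p with hf'
  have hst : HasStrictFDerivAt f f' p :=
    (hf.contDiffAt (hV.mem_nhds hpV)).hasStrictFDerivAt one_ne_zero
  have hrange : LinearMap.range (f' : En n →ₗ[ℝ] EuclideanSpace ℝ (Fin m)) = ⊤ := LinearMap.range_eq_top.2 hsurj
  have fp0 : f p = 0 := by
    have hmem : p ∈ Γ ∩ V := ⟨hpΓ, hpV⟩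
    rw [hΓV] at hmem
    exact hmem.2
  have key : ∀ w : En n, f' w = 0 → ⟪x - p, w⟫ ≤ 0 := by
    intro w hw
    set w' : LinearMap.ker (f' : En n →ₗ[ℝ] EuclideanSpace ℝ (Fin m)) := ⟨w, LinearMap.mem_ker.2 hw⟩ with hw'
    set φ := hst.implicitFunction f f' hrange with hφ
    set γ : ℝ → En n := fun s => φ (f p) (s • w') with hγ
    have hγ0 : γ 0 = p := by
      show φ (f p) ((0 : ℝ) • w') = p
      rw [zero_smul]
      exact hst.implicitFunction_apply_image hrange
    -- derivative of γ at 0 is w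
    have hψ : HasDerivAt (fun s : ℝ => s • w') w' 0 := by
      have hL := (hasDerivAt_id (0:ℝ)).smul_const w'
      simpa using hL
    have hφd : HasFDerivAt (φ (f p)) (LinearMap.ker (f' : En n →ₗ[ℝ] EuclideanSpace ℝ (Fin m))).subtypeL 0 :=
      (hst.to_implicitFunction hrange).hasFDerivAt
    have hγd : HasDerivAt γ w 0 := by
      have h0 : (fun s : ℝ => s • w') 0 = 0 := by simp
      have := HasFDerivAt.comp_hasDerivAt (x := (0 : ℝ)) (h0 ▸ hφd) hψ
      exact this
    -- eventually γ s ∈ Γ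
    have hγΓ : ∀ᶠ s in 𝓝 (0 : ℝ), γ s ∈ Γ := by
      have h1 := hst.map_implicitFunction_eq hrange
      have hcont : Continuous fun s : ℝ => s • w' := continuous_id.smul continuous_const
      have ht : Tendsto (fun s : ℝ => ((f p), s • w'))
          (𝓝 0) (𝓝 ((f p), (0 : LinearMap.ker (f' : En n →ₗ[ℝ] EuclideanSpace ℝ (Fin m))))) := by
        apply Tendsto.prodMk_nhds tendsto_const_nhds
        have := hcont.tendsto 0
        simpa using this
      have h2 : ∀ᶠ s in 𝓝 (0 : ℝ), f (γ s) = f p := ht.eventually h1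
      have h3 : ∀ᶠ s in 𝓝 (0 : ℝ), γ s ∈ V := by
        have hc := hγd.continuousAt
        rw [ContinuousAt, hγ0] at hc
        exact hc (hV.mem_nhds hpV)
      filter_upwards [h2, h3] with s h2s h3s
      have : γ s ∈ {y ∈ V | f y = 0} := ⟨h3s, by rw [h2s, fp0]⟩
      rw [← hΓV] at this
      exact this.1
    -- slope limit
    have hslope : Tendsto (fun s : ℝ => s⁻¹ • (γ s - p)) (𝓝[>] 0) (𝓝 w) := by
      have h1 := hasDerivAt_iff_tendsto_slope.1 hγd
      have h2 : Tendsto (slope γ 0) (𝓝[>] 0) (𝓝 w) :=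
        h1.mono_left (nhdsWithin_mono 0 (fun s hs => ne_of_gt hs))
      refine h2.congr fun s => ?_
      rw [slope_def_module, hγ0, sub_zero]
    have hA : Tendsto (fun s : ℝ => ⟪x - p, s⁻¹ • (γ s - p)⟫) (𝓝[>] 0) (𝓝 ⟪x - p, w⟫) :=
      tendsto_const_nhds.inner hslope
    have hγp : Tendsto (fun s : ℝ => γ s - p) (𝓝[>] 0) (𝓝 0) := by
      have h1 : Tendsto γ (𝓝[>] (0:ℝ)) (𝓝 p) := by
        have hc := hγd.continuousAt
        rw [ContinuousAt, hγ0] at hc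
        exact hc.mono_left nhdsWithin_le_nhds
      have h2 : Tendsto (fun s : ℝ => γ s - p) (𝓝[>] (0:ℝ)) (𝓝 (p - p)) :=
        h1.sub tendsto_const_nhds
      simpa using h2
    have hB : Tendsto (fun s : ℝ => ‖s⁻¹ • (γ s - p)‖ * ‖γ s - p‖ / 2) (𝓝[>] 0) (𝓝 0) := by
      have := (hslope.norm.mul hγp.norm).div_const 2
      simpa using this
    have hle : ∀ᶠ s in 𝓝[>] (0 : ℝ),
        ⟪x - p, s⁻¹ • (γ s - p)⟫ ≤ ‖s⁻¹ • (γ s - p)‖ * ‖γ s - p‖ / 2 := by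
      filter_upwards [eventually_nhdsWithin_of_eventually_nhds hγΓ,
        self_mem_nhdsWithin] with s hsΓ hs
      have hs' : (0 : ℝ) < s := hs
      have hin := nearest_inner_le hsΓ hd
      rw [real_inner_smul_right, norm_smul, Real.norm_eq_abs, abs_of_pos (inv_pos.2 hs')]
      set a := ‖γ s - p‖
      have ha : 0 ≤ a := norm_nonneg _
      have h2 : ⟪x - p, γ s - p⟫ ≤ a ^ 2 / 2 := hin
      have h3 : (0:ℝ) ≤ s⁻¹ := (inv_pos.2 hs').le
      nlinarith
    exact le_of_tendsto_of_tendsto hA hB hle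
  have h1 := key v hv
  have h2 := key (-v) (by rw [map_neg, hv, neg_zero])
  rw [inner_neg_right] at h2
  linarith


/-- If the adjoint of `A` is bounded below, then any vector is close to `ker A`
quantitatively in terms of `‖A u‖`. -/
lemma dist_ker_bound {E F : Type*} [NormedAddCommGroup E] [InnerProductSpace ℝ E]
    [NormedAddCommGroup F] [InnerProductSpace ℝ F] [FiniteDimensional ℝ E] [FiniteDimensional ℝ F]
    (A : E →L[ℝ] F) {c : ℝ} (hc : 0 < c)
    (hlow : ∀ v : F, c * ‖v‖ ≤ ‖ContinuousLinearMap.adjoint A v‖) (u : E) :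
    ∃ w ∈ LinearMap.ker (A : E →ₗ[ℝ] F), ‖u - w‖ ≤ c⁻¹ * ‖A u‖ := by
  set K : Submodule ℝ E := LinearMap.ker (A : E →ₗ[ℝ] F) with hK
  set w : E := (K.orthogonalProjectionOnto u : E) with hw
  refine ⟨w, (K.orthogonalProjectionOnto u).2, ?_⟩
  have hperp : u - w ∈ Kᗮ := K.sub_starProjection_mem_orthogonal u
  -- Kᗮ = range of adjoint
  have hker : K = (LinearMap.range (ContinuousLinearMap.adjoint A : F →ₗ[ℝ] E))ᗮ := by
    ext z
    constructor
    · intro hz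
      rw [Submodule.mem_orthogonal]
      rintro y ⟨v, rfl⟩
      rw [ContinuousLinearMap.coe_coe, ContinuousLinearMap.adjoint_inner_left]
      have : A z = 0 := hz
      simp [this]
    · intro hz
      rw [Submodule.mem_orthogonal] at hz
      have h0 := hz (ContinuousLinearMap.adjoint A (A z)) ⟨A z, rfl⟩
      rw [ContinuousLinearMap.adjoint_inner_left] at h0
      have : A z = 0 := by
        rwa [inner_self_eq_zero (𝕜 := ℝ)] at h0
      exact this
  have hrange : Kᗮ = LinearMap.range (ContinuousLinearMap.adjoint A : F →ₗ[ℝ] E) := by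
    rw [hker, Submodule.orthogonal_orthogonal]
  rw [hrange] at hperp
  obtain ⟨v, hv⟩ := hperp
  simp only [ContinuousLinearMap.coe_coe] at hv
  -- main estimate
  have hAw : A w = 0 := (K.orthogonalProjectionOnto u).2
  have h1 : ‖u - w‖ ^ 2 = ⟪v, A (u - w)⟫ := by
    rw [← hv, ← ContinuousLinearMap.adjoint_inner_left, hv]
    rw [real_inner_self_eq_norm_sq]
  have h2 : A (u - w) = A u := by rw [map_sub, hAw, sub_zero]
  have h3 : ‖u - w‖ ^ 2 ≤ ‖v‖ * ‖A u‖ := by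
    rw [h1, h2]
    exact real_inner_le_norm v (A u)
  have h4 : c * ‖v‖ ≤ ‖u - w‖ := by rw [← hv]; exact hlow v
  rcases eq_or_lt_of_le (norm_nonneg (u - w)) with h5 | h5
  · rw [← h5]; positivity
  · rw [← mul_le_mul_iff_right₀ h5, mul_comm ‖u - w‖ (c⁻¹ * ‖A u‖)]
    calc ‖u - w‖ * ‖u - w‖ = ‖u - w‖ ^ 2 := (sq ‖u - w‖).symm
    _ ≤ ‖v‖ * ‖A u‖ := h3
    _ ≤ (c⁻¹ * ‖u - w‖) * ‖A u‖ := by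
        apply mul_le_mul_of_nonneg_right _ (norm_nonneg _)
        rw [← mul_le_mul_iff_right₀ hc, ← mul_assoc, mul_inv_cancel₀ hc.ne', one_mul]
        exact h4
    _ = c⁻¹ * ‖A u‖ * ‖u - w‖ := by ring

lemma dist_emb1_sq {n : ℕ} (a c : En n) (b e : ℝ) :
    dist (emb1 n (a, b)) (emb1 n (c, e)) ^ 2 = dist a c ^ 2 + dist b e ^ 2 := by
  have h := WithLp.prod_dist_eq_of_L2 (emb1 n (a, b)) (emb1 n (c, e))
  rw [h, Real.sq_sqrt (by positivity)]
  rfl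

lemma dist_emb1_same_fst {n : ℕ} (a : En n) (b e : ℝ) :
    dist (emb1 n (a, b)) (emb1 n (a, e)) = dist b e := by
  have h := dist_emb1_sq a a b e
  simp only [dist_self] at h
  have := dist_nonneg (x := emb1 n (a, b)) (y := emb1 n (a, e))
  nlinarith [dist_nonneg (x := b) (y := e)]

set_option maxHeartbeats 1600000 in
/-- Uniform tangency: normals at nearest points are uniformly almost-orthogonal to chords. -/
lemma uniform_tangent {n k : ℕ} {Γ : Set (En n)} (hcomp : IsCompact Γ)
    (hman : IsC1Submanifold k Γ) {ε : ℝ} (hε : 0 < ε) :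
    ∃ s₀ > 0, ∀ x p q : En n, p ∈ Γ → q ∈ Γ → Metric.infDist x Γ = dist x p →
      dist q p ≤ s₀ → ⟪x - p, q - p⟫ ≤ ε * dist x p * dist q p := by
  by_contra hcon
  push_neg at hcon
  have hseq : ∀ j : ℕ, ∃ x p q : En n, p ∈ Γ ∧ q ∈ Γ ∧ Metric.infDist x Γ = dist x p ∧
      dist q p ≤ ((j : ℝ) + 1)⁻¹ ∧ ε * dist x p * dist q p < ⟪x - p, q - p⟫ := by
    intro j
    obtain ⟨x, p, q, h⟩ := hcon ((j : ℝ) + 1)⁻¹ (by positivity)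
    exact ⟨x, p, q, h⟩
  choose X0 P0 Q0 hP0 hQ0 hXd0 hdist0 hlt0 using hseq
  -- positivity of the distances
  have hpos : ∀ j, 0 < dist (X0 j) (P0 j) ∧ 0 < dist (Q0 j) (P0 j) := by
    intro j
    have h1 := hlt0 j
    have h2 : ⟪X0 j - P0 j, Q0 j - P0 j⟫ ≤ dist (X0 j) (P0 j) * dist (Q0 j) (P0 j) := by
      rw [dist_eq_norm, dist_eq_norm]
      exact real_inner_le_norm _ _
    by_contra hcontra
    rw [not_and_or] at hcontra
    have hd1 := dist_nonneg (x := X0 j) (y := P0 j)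
    have hd2 := dist_nonneg (x := Q0 j) (y := P0 j)
    rcases hcontra with h | h
    · have : dist (X0 j) (P0 j) = 0 := le_antisymm (not_lt.1 h) hd1
      rw [this] at h1 h2; simp at h1 h2; nlinarith
    · have : dist (Q0 j) (P0 j) = 0 := le_antisymm (not_lt.1 h) hd2
      rw [this] at h1 h2; simp at h1 h2; nlinarith
  -- normalized vectors
  set U0 : ℕ → En n := fun j => (dist (Q0 j) (P0 j))⁻¹ • (Q0 j - P0 j) with hU0
  set N0 : ℕ → En n := fun j => (dist (X0 j) (P0 j))⁻¹ • (X0 j - P0 j) with hN0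
  have hU0n : ∀ j, ‖U0 j‖ = 1 := by
    intro j
    rw [hU0, norm_smul, Real.norm_eq_abs, abs_of_pos (inv_pos.2 (hpos j).2),
      ← dist_eq_norm, inv_mul_cancel₀ (hpos j).2.ne']
  have hN0n : ∀ j, ‖N0 j‖ = 1 := by
    intro j
    rw [hN0, norm_smul, Real.norm_eq_abs, abs_of_pos (inv_pos.2 (hpos j).1),
      ← dist_eq_norm, inv_mul_cancel₀ (hpos j).1.ne']
  have hεNU : ∀ j, ε < ⟪N0 j, U0 j⟫ := by
    intro j
    have h1 := hlt0 j
    have hd1 := (hpos j).1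
    have hd2 := (hpos j).2
    have hNU : ⟪N0 j, U0 j⟫ =
        ⟪X0 j - P0 j, Q0 j - P0 j⟫ / (dist (X0 j) (P0 j) * dist (Q0 j) (P0 j)) := by
      rw [hN0, hU0, real_inner_smul_left, real_inner_smul_right]
      field_simp
    rw [hNU, lt_div_iff₀ (by positivity)]
    nlinarith
  -- subsequence extraction
  obtain ⟨plim, hplimΓ, φ1, hφ1, hP1⟩ := hcomp.tendsto_subseq hP0
  obtain ⟨ulim, hulim, φ2, hφ2, hU2⟩ := (isCompact_sphere (0 : En n) 1).tendsto_subseq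
    (x := fun j => U0 (φ1 j)) (fun j => by simp [mem_sphere_zero_iff_norm, hU0n])
  obtain ⟨nulim, hnulim, φ3, hφ3, hN3⟩ := (isCompact_sphere (0 : En n) 1).tendsto_subseq
    (x := fun j => N0 (φ1 (φ2 j))) (fun j => by simp [mem_sphere_zero_iff_norm, hN0n])
  set ψ : ℕ → ℕ := fun j => φ1 (φ2 (φ3 j)) with hψdef
  have hψmono : StrictMono ψ := hφ1.comp (hφ2.comp hφ3)
  have hPtend : Tendsto (fun j => P0 (ψ j)) atTop (𝓝 plim) :=
    hP1.comp ((hφ2.comp hφ3).tendsto_atTop)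
  have hUtend : Tendsto (fun j => U0 (ψ j)) atTop (𝓝 ulim) := hU2.comp hφ3.tendsto_atTop
  have hNtend : Tendsto (fun j => N0 (ψ j)) atTop (𝓝 nulim) := hN3
  have hPQtend : Tendsto (fun j => dist (Q0 (ψ j)) (P0 (ψ j))) atTop (𝓝 0) := by
    apply squeeze_zero (fun j => dist_nonneg) (fun j => (hdist0 (ψ j)).trans ?_)
    · have h := tendsto_one_div_add_atTop_nhds_zero_nat (𝕜 := ℝ)
      simpa [one_div] using h
    · have h : (j : ℝ) ≤ (ψ j : ℝ) := by exact_mod_cast hψmono.le_apply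
      exact inv_anti₀ (by positivity) (by linarith)
  have hQtend : Tendsto (fun j => Q0 (ψ j)) atTop (𝓝 plim) := by
    rw [tendsto_iff_dist_tendsto_zero]
    apply squeeze_zero (fun j => dist_nonneg)
      (fun j => dist_triangle (Q0 (ψ j)) (P0 (ψ j)) plim)
    have h1 : Tendsto (fun j => dist (P0 (ψ j)) plim) atTop (𝓝 0) :=
      tendsto_iff_dist_tendsto_zero.1 hPtend
    simpa using hPQtend.add h1
  -- chart at plim
  obtain ⟨V, f, hV, hpV, hf, hΓV, hsurjV⟩ := hman plim hplimΓ
  set Alim : En n →L[ℝ] EuclideanSpace ℝ (Fin (n - k)) := fderiv ℝ f plim with hAlimdef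
  have hAlimsurj : Function.Surjective ⇑Alim := by
    rw [hAlimdef, ← fderivWithin_of_isOpen hV hpV]
    exact hsurjV plim hpV
  have hfc : ContinuousOn (fun z => fderiv ℝ f z) V := by
    apply (hf.continuousOn_fderivWithin hV.uniqueDiffOn le_rfl).congr
    intro z hz
    exact (fderivWithin_of_isOpen hV hz).symm
  have hAtend : Tendsto (fun j => fderiv ℝ f (P0 (ψ j))) atTop (𝓝 Alim) :=
    ((hfc.continuousAt (hV.mem_nhds hpV)).tendsto).comp hPtend
  -- Step A : Alim ulim = 0
  have hzero : ∀ z, z ∈ Γ → z ∈ V → f z = 0 := by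
    intro z h1 h2
    have : z ∈ Γ ∩ V := ⟨h1, h2⟩
    rw [hΓV] at this
    exact this.2
  have hAlimu : Alim ulim = 0 := by
    have t1 : Tendsto (fun j => Alim (U0 (ψ j))) atTop (𝓝 (Alim ulim)) :=
      (Alim.continuous.tendsto _).comp hUtend
    have t2 : Tendsto (fun j => Alim (U0 (ψ j))) atTop (𝓝 0) := by
      rw [NormedAddCommGroup.tendsto_nhds_zero]
      intro η hη
      -- find a ball on which the derivative is close to Alim
      have hev : ∀ᶠ z in 𝓝 plim, z ∈ V ∧ ‖fderiv ℝ f z - Alim‖ < η / 2 := by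
        have h1 : ∀ᶠ z in 𝓝 plim, ‖fderiv ℝ f z - Alim‖ < η / 2 := by
          have hc := (hfc.continuousAt (hV.mem_nhds hpV)).tendsto
          have hev2 := hc.eventually_mem (Metric.ball_mem_nhds Alim (show (0:ℝ) < η/2 by positivity))
          filter_upwards [hev2] with z hz
          rw [Metric.mem_ball, dist_eq_norm] at hz
          exact hz
        exact (hV.eventually_mem hpV).and h1
      obtain ⟨δ, hδ, hball⟩ := Metric.eventually_nhds_iff_ball.1 hev
      have hPev : ∀ᶠ j in atTop, P0 (ψ j) ∈ Metric.ball plim δ :=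
        hPtend (Metric.ball_mem_nhds _ hδ)
      have hQev : ∀ᶠ j in atTop, Q0 (ψ j) ∈ Metric.ball plim δ :=
        hQtend (Metric.ball_mem_nhds _ hδ)
      filter_upwards [hPev, hQev] with j hPj hQj
      have hmvt : ‖f (Q0 (ψ j)) - f (P0 (ψ j)) - Alim (Q0 (ψ j) - P0 (ψ j))‖ ≤
          η / 2 * ‖Q0 (ψ j) - P0 (ψ j)‖ := by
        apply (convex_ball plim δ).norm_image_sub_le_of_norm_hasFDerivWithin_le'
          (f' := fun z => fderiv ℝ f z) (φ := Alim) ?_ ?_ hPj hQj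
        · intro z hz
          have hzV : z ∈ V := (hball z hz).1
          exact (((hf.contDiffAt (hV.mem_nhds hzV)).differentiableAt
            one_ne_zero).hasFDerivAt).hasFDerivWithinAt
        · intro z hz
          exact (hball z hz).2.le
      rw [hzero _ (hQ0 (ψ j)) (hball _ hQj).1, hzero _ (hP0 (ψ j)) (hball _ hPj).1] at hmvt
      simp only [sub_zero, zero_sub, norm_neg] at hmvt
      have hAU : Alim (U0 (ψ j)) = (dist (Q0 (ψ j)) (P0 (ψ j)))⁻¹ • Alim (Q0 (ψ j) - P0 (ψ j)) := by
        rw [hU0, map_smul]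
      have hd2 := (hpos (ψ j)).2
      rw [hAU, norm_smul, Real.norm_eq_abs, abs_of_pos (inv_pos.2 hd2)]
      calc (dist (Q0 (ψ j)) (P0 (ψ j)))⁻¹ * ‖Alim (Q0 (ψ j) - P0 (ψ j))‖
          ≤ (dist (Q0 (ψ j)) (P0 (ψ j)))⁻¹ * (η / 2 * ‖Q0 (ψ j) - P0 (ψ j)‖) := by
            apply mul_le_mul_of_nonneg_left hmvt (by positivity)
        _ = η / 2 := by
            rw [← dist_eq_norm]
            field_simp
        _ < η := by linarith
    exact tendsto_nhds_unique t1 t2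
  -- Step B : antilipschitz bound for the adjoint of Alim
  have hadj_inj : LinearMap.ker (ContinuousLinearMap.adjoint Alim :
      EuclideanSpace ℝ (Fin (n - k)) →L[ℝ] En n).toLinearMap = ⊥ := by
    rw [LinearMap.ker_eq_bot]
    intro v v' hvv
    have h : ∀ z : En n, ⟪v - v', Alim z⟫ = 0 := by
      intro z
      have h1 : ContinuousLinearMap.adjoint Alim (v - v') = 0 := by
        rw [map_sub]
        simpa [sub_eq_zero] using hvv
      rw [← ContinuousLinearMap.adjoint_inner_left, h1, inner_zero_left]
    obtain ⟨z, hz⟩ := hAlimsurj (v - v')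
    have := h z
    rw [hz, inner_self_eq_zero (𝕜 := ℝ), sub_eq_zero] at this
    exact this
  obtain ⟨K, hK0, hKanti⟩ :=
    LinearMap.exists_antilipschitzWith (ContinuousLinearMap.adjoint Alim :
      EuclideanSpace ℝ (Fin (n - k)) →L[ℝ] En n).toLinearMap hadj_inj
  have hKpos : (0 : ℝ) < (K : ℝ) := by exact_mod_cast hK0
  have hlowlim : ∀ v, (K : ℝ)⁻¹ * ‖v‖ ≤ ‖ContinuousLinearMap.adjoint Alim v‖ := by
    intro v
    have h := hKanti.le_mul_dist v 0
    simp only [dist_zero_right, map_zero] at h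
    have h2 : ‖v‖ ≤ (K : ℝ) * ‖ContinuousLinearMap.adjoint Alim v‖ := by exact_mod_cast h
    rw [inv_mul_le_iff₀ hKpos]
    exact h2
  set c : ℝ := ((2 : ℝ) * K)⁻¹ with hcdef
  have hc : 0 < c := by positivity
  -- eventual facts
  have hAnorm : ∀ r : ℝ, 0 < r → ∀ᶠ j in atTop, ‖fderiv ℝ f (P0 (ψ j)) - Alim‖ < r := by
    intro r hr
    filter_upwards [hAtend.eventually_mem (Metric.ball_mem_nhds Alim hr)] with j hj
    rw [Metric.mem_ball, dist_eq_norm] at hj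
    exact hj
  have hlowj : ∀ᶠ j in atTop, ∀ v, c * ‖v‖ ≤
      ‖ContinuousLinearMap.adjoint (fderiv ℝ f (P0 (ψ j))) v‖ := by
    filter_upwards [hAnorm ((2 * (K : ℝ))⁻¹) (by positivity)] with j hj v
    set B := fderiv ℝ f (P0 (ψ j)) - Alim with hBdef
    have hsplit : ContinuousLinearMap.adjoint (fderiv ℝ f (P0 (ψ j))) v =
        ContinuousLinearMap.adjoint Alim v + ContinuousLinearMap.adjoint B v := by
      rw [hBdef, map_sub]
      simp
    have hBn : ‖ContinuousLinearMap.adjoint B v‖ ≤ (2 * (K : ℝ))⁻¹ * ‖v‖ := by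
      calc ‖ContinuousLinearMap.adjoint B v‖ ≤ ‖ContinuousLinearMap.adjoint B‖ * ‖v‖ :=
            (ContinuousLinearMap.adjoint B).le_opNorm v
        _ ≤ (2 * (K : ℝ))⁻¹ * ‖v‖ := by
            apply mul_le_mul_of_nonneg_right _ (norm_nonneg v)
            rw [LinearIsometryEquiv.norm_map]
            exact hj.le
    have h1 := hlowlim v
    have h2 : ‖ContinuousLinearMap.adjoint Alim v‖ ≤
        ‖ContinuousLinearMap.adjoint (fderiv ℝ f (P0 (ψ j))) v‖ +
        ‖ContinuousLinearMap.adjoint B v‖ := by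
      have heq : ContinuousLinearMap.adjoint Alim v =
          ContinuousLinearMap.adjoint (fderiv ℝ f (P0 (ψ j))) v -
          ContinuousLinearMap.adjoint B v := by
        rw [hsplit]; abel
      rw [heq]
      exact norm_sub_le _ _
    have harith : (K : ℝ)⁻¹ * ‖v‖ - (2 * (K : ℝ))⁻¹ * ‖v‖ = c * ‖v‖ := by
      rw [hcdef]
      field_simp
      ring
    linarith
  -- smallness of A_j ulim
  have hulimn : ‖ulim‖ = 1 := by rwa [mem_sphere_zero_iff_norm] at hulim
  have hAusmall : ∀ᶠ j in atTop, ‖fderiv ℝ f (P0 (ψ j)) ulim‖ < ε / 4 * c := by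
    filter_upwards [hAnorm (ε / 4 * c) (by positivity)] with j hj
    have heq : fderiv ℝ f (P0 (ψ j)) ulim = (fderiv ℝ f (P0 (ψ j)) - Alim) ulim := by
      rw [ContinuousLinearMap.sub_apply, hAlimu, sub_zero]
    rw [heq]
    calc ‖(fderiv ℝ f (P0 (ψ j)) - Alim) ulim‖ ≤ ‖fderiv ℝ f (P0 (ψ j)) - Alim‖ * ‖ulim‖ :=
          (fderiv ℝ f (P0 (ψ j)) - Alim).le_opNorm ulim
      _ = ‖fderiv ℝ f (P0 (ψ j)) - Alim‖ := by rw [hulimn, mul_one]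
      _ < ε / 4 * c := hj
  have hUclose : ∀ᶠ j in atTop, ‖U0 (ψ j) - ulim‖ < ε / 2 := by
    filter_upwards [hUtend.eventually_mem (Metric.ball_mem_nhds ulim
      (show (0:ℝ) < ε/2 by positivity))] with j hj
    rwa [Metric.mem_ball, dist_eq_norm] at hj
  have hPV : ∀ᶠ j in atTop, P0 (ψ j) ∈ V := hPtend.eventually_mem (hV.mem_nhds hpV)
  -- pick one index satisfying everything
  obtain ⟨j, h1, h2, h3, h4⟩ := (hlowj.and (hAusmall.and (hUclose.and hPV))).exists
  set Aj := fderiv ℝ f (P0 (ψ j)) with hAj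
  obtain ⟨w, hwker, hwb⟩ := dist_ker_bound Aj hc h1 ulim
  have hwclose : ‖ulim - w‖ < ε / 4 := by
    calc ‖ulim - w‖ ≤ c⁻¹ * ‖Aj ulim‖ := hwb
      _ < c⁻¹ * (ε / 4 * c) := by
          apply mul_lt_mul_of_pos_left h2 (inv_pos.2 hc)
      _ = ε / 4 := by field_simp
  have horth : ⟪X0 (ψ j) - P0 (ψ j), w⟫ = 0 := by
    apply nearest_orth_ker hV hf hΓV (hP0 (ψ j)) h4 (hsurjV _ h4) (hXd0 (ψ j))
    exact LinearMap.mem_ker.1 hwker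
  have hNw : ⟪N0 (ψ j), w⟫ = 0 := by
    rw [hN0, real_inner_smul_left, horth, mul_zero]
  have hsplitU : U0 (ψ j) = (U0 (ψ j) - ulim) + (ulim - w) + w := by abel
  have hNn := hN0n (ψ j)
  have hfinal : ⟪N0 (ψ j), U0 (ψ j)⟫ ≤ ε / 2 + ε / 4 := by
    rw [hsplitU, inner_add_right, inner_add_right, hNw, add_zero]
    have b1 : ⟪N0 (ψ j), U0 (ψ j) - ulim⟫ ≤ ε / 2 := by
      calc ⟪N0 (ψ j), U0 (ψ j) - ulim⟫ ≤ ‖N0 (ψ j)‖ * ‖U0 (ψ j) - ulim‖ := real_inner_le_norm _ _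
        _ = ‖U0 (ψ j) - ulim‖ := by rw [hNn, one_mul]
        _ ≤ ε / 2 := h3.le
    have b2 : ⟪N0 (ψ j), ulim - w⟫ ≤ ε / 4 := by
      calc ⟪N0 (ψ j), ulim - w⟫ ≤ ‖N0 (ψ j)‖ * ‖ulim - w‖ := real_inner_le_norm _ _
        _ = ‖ulim - w‖ := by rw [hNn, one_mul]
        _ ≤ ε / 4 := hwclose.le
    linarith
  have := hεNU (ψ j)
  linarith

/-- Moving out along the (approximate) normal direction: the point
`p + (t / d(x)) • (x - p)` stays at distance at least `(1 - ε) t` from `Γ`. -/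
lemma push_out {n k : ℕ} {Γ : Set (En n)} (hne : Γ.Nonempty) (hcomp : IsCompact Γ)
    (hman : IsC1Submanifold k Γ) {ε : ℝ} (hε : 0 < ε) (hε1 : ε ≤ 1) :
    ∃ r₀ > 0, ∀ x p : En n, p ∈ Γ → Metric.infDist x Γ = dist x p → x ∉ Γ →
      ∀ t : ℝ, 0 < t → t ≤ r₀ →
      (1 - ε) * t ≤ Metric.infDist (p + (t / dist x p) • (x - p)) Γ := by
  obtain ⟨s₀, hs₀, hunif⟩ := uniform_tangent hcomp hman hε
  refine ⟨s₀ / 2, by positivity, ?_⟩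
  intro x p hpΓ hd hxΓ t ht hts
  have hd0 : 0 < dist x p := by
    rcases eq_or_lt_of_le (dist_nonneg (x := x) (y := p)) with h | h
    · exfalso
      apply hxΓ
      have : x = p := by rwa [eq_comm, dist_eq_zero] at h
      rw [this]; exact hpΓ
    · exact h
  set d := dist x p with hddef
  set z := p + (t / d) • (x - p) with hzdef
  have hzp : z - p = (t / d) • (x - p) := by rw [hzdef]; abel
  have hzpn : ‖z - p‖ = t := by
    rw [hzp, norm_smul, Real.norm_eq_abs, abs_of_pos (by positivity), ← dist_eq_norm, ← hddef]
    field_simp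
  have h1εt : 0 ≤ (1 - ε) * t := by nlinarith
  -- lower bound on distances to all points of Γ
  have hbound : ∀ q ∈ Γ, (1 - ε) * t ≤ dist z q := by
    intro q hq
    rcases le_or_gt (dist q p) s₀ with hcase | hcase
    · -- nearby q : use uniform tangency
      have hu := hunif x p q hpΓ hq hd hcase
      have hzq : z - q = (z - p) - (q - p) := by abel
      have hnormsq : dist z q ^ 2 = t ^ 2 - 2 * ⟪z - p, q - p⟫ + ‖q - p‖ ^ 2 := by
        rw [dist_eq_norm, hzq, norm_sub_sq_real (z - p) (q - p), hzpn]
      have hinner : ⟪z - p, q - p⟫ ≤ ε * t * ‖q - p‖ := by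
        rw [hzp, real_inner_smul_left]
        have h2 : (t / d) * ⟪x - p, q - p⟫ ≤ (t / d) * (ε * d * dist q p) := by
          apply mul_le_mul_of_nonneg_left hu (by positivity)
        calc (t / d) * ⟪x - p, q - p⟫ ≤ (t / d) * (ε * d * dist q p) := h2
          _ = ε * t * dist q p := by field_simp
          _ = ε * t * ‖q - p‖ := by rw [dist_eq_norm]
      have hsq : (1 - ε) * t ^ 2 ≤ dist z q ^ 2 := by
        rw [hnormsq]
        nlinarith [sq_nonneg (t - ‖q - p‖), norm_nonneg (q - p)]
      nlinarith [dist_nonneg (x := z) (y := q), sq_nonneg ((1 - ε) * t - dist z q)]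
    · -- faraway q
      have htr : dist q p ≤ dist q z + dist z p := dist_triangle q z p
      have hzp' : dist z p = t := by rw [dist_eq_norm]; exact hzpn
      have h2 : dist z q = dist q z := dist_comm z q
      have h3 : t ≤ s₀ / 2 := hts
      nlinarith
  -- conclude via infDist
  by_contra hcon
  push_neg at hcon
  rw [Metric.infDist_lt_iff hne] at hcon
  obtain ⟨q, hq, hqlt⟩ := hcon
  exact absurd hqlt (not_lt.2 (hbound q hq))

end Aux

set_option maxHeartbeats 1000000 in
/-- with `Γ ⊂ ℝⁿ` a nonempty compact C¹ embedded `k`-submanifold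
(`1 ≤ k ≤ n−1`), `ρ > 0` with `δ(p, r) > r/2` for all `p ∈ Γ` and `0 < r < 2ρ`, and `W` as
defined above: if `(x_i, y_i)` is a sequence of points of `W` with `y_i → 0+`, then
`d(x_i)/y_i → 0`, where `d(x) = dist(x, Γ)`. -/
theorem statement5
    (n k : ℕ) (hk : 1 ≤ k) (hkn : k ≤ n - 1)
    (Γ : Set (En n)) (hne : Γ.Nonempty) (hcomp : IsCompact Γ)
    (hman : IsC1Submanifold k Γ)
    (ρ : ℝ) (hρ : 0 < ρ)
    (hδ : ∀ p ∈ Γ, ∀ r : ℝ, 0 < r → r < 2 * ρ → r / 2 < deltaG Γ p r)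
    (x : ℕ → En n) (y : ℕ → ℝ)
    (hW : ∀ i, emb1 n (x i, y i) ∈ Wset Γ ρ)
    (hy : Filter.Tendsto y Filter.atTop (nhds 0)) :
    Filter.Tendsto (fun i => Metric.infDist (x i) Γ / y i) Filter.atTop (nhds 0) := by
  -- basic consequences of membership in W
  have hsnd : ∀ i, snd1 n (emb1 n (x i, y i)) = y i := fun i => rfl
  have hy0 : ∀ i, 0 < y i := fun i => (hW i).1.1
  have hyρ : ∀ i, y i < ρ := fun i => (hW i).1.2
  have havoid : ∀ i, ∀ z : En n, Metric.infDist z Γ ≤ 2 * ρ →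
      Metric.infDist z Γ ≤ dist (emb1 n (x i, y i)) (emb1 n (z, 0)) := by
    intro i z hz
    have h := (hW i).2
    rw [mem_union, not_or] at h
    have h2 := h.2
    rw [mem_iUnion₂] at h2
    push_neg at h2
    have h3 := h2 z hz
    rwa [Metric.mem_ball, not_lt] at h3
  have hd2ρ : ∀ i, Metric.infDist (x i) Γ ≤ 2 * ρ := by
    intro i
    by_contra hcontra
    rw [not_le] at hcontra
    have h := (hW i).2
    rw [mem_union, not_or] at h
    have h1 := h.1
    rw [mem_iUnion₂] at h1
    push_neg at h1
    have h3 := h1 (x i) hcontra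
    rw [Metric.mem_ball, not_lt] at h3
    rw [dist_emb1_same_fst] at h3
    have : dist (y i) 0 = y i := by rw [Real.dist_eq, sub_zero, abs_of_pos (hy0 i)]
    rw [this] at h3
    linarith only [h3, hyρ i, hρ]
  have hdy : ∀ i, Metric.infDist (x i) Γ ≤ y i := by
    intro i
    have h := havoid i (x i) (hd2ρ i)
    rw [dist_emb1_same_fst] at h
    have : dist (y i) 0 = y i := by rw [Real.dist_eq, sub_zero, abs_of_pos (hy0 i)]
    rw [this] at h
    exact h
  -- main estimate
  rw [NormedAddCommGroup.tendsto_nhds_zero]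
  intro ε' hε'
  set M : ℝ := 1 + (ε')⁻¹ * (ε')⁻¹ with hMdef
  clear_value M
  have hM1 : (1 : ℝ) ≤ M := by
    rw [hMdef]
    nlinarith only [hMdef, mul_pos (inv_pos.2 hε') (inv_pos.2 hε')]
  have hM0 : (0 : ℝ) < M := by linarith only [hM1]
  have hεM : (0 : ℝ) < (2 * M)⁻¹ := by positivity
  have hεM1 : (2 * M)⁻¹ ≤ 1 := by
    rw [inv_le_one₀ (by linarith only [hM1])]
    linarith only [hM1]
  obtain ⟨r₀, hr₀, hpush⟩ := push_out hne hcomp hman hεM hεM1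
  set a : ℝ := min r₀ (2 * ρ) / M with hadef
  have hminpos : 0 < min r₀ (2 * ρ) := lt_min hr₀ (by linarith only [hρ])
  have ha : 0 < a := by positivity
  have hev : ∀ᶠ i in atTop, y i < a := hy.eventually_mem (Iio_mem_nhds ha)
  filter_upwards [hev] with i hia
  set d : ℝ := Metric.infDist (x i) Γ with hddef
  have hd0 : 0 ≤ d := Metric.infDist_nonneg
  rcases eq_or_lt_of_le hd0 with h0 | h0
  · rw [← h0]
    simp only [zero_div, norm_zero]
    exact hε'
  · have hxΓ : x i ∉ Γ := by
      intro hmem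
      rw [hddef] at h0
      rw [Metric.infDist_zero_of_mem hmem] at h0
      exact lt_irrefl 0 h0
    obtain ⟨p, hpΓ, hpd⟩ := hcomp.exists_infDist_eq_dist hne (x i)
    have hdp : dist (x i) p = d := by rw [hddef, hpd]
    set t : ℝ := M * d with htdef
    have ht0 : 0 < t := by positivity
    have htmin : t ≤ min r₀ (2 * ρ) := by
      have h1 : d ≤ y i := hdy i
      have h2 : d < a := lt_of_le_of_lt h1 hia
      have h3 : t < M * a := by
        rw [htdef]
        exact mul_lt_mul_of_pos_left h2 hM0
      have h4 : M * a = min r₀ (2 * ρ) := by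
        rw [hadef]
        field_simp
      linarith only [h3, h4]
    have htr : t ≤ r₀ := htmin.trans (min_le_left _ _)
    have ht2ρ : t ≤ 2 * ρ := htmin.trans (min_le_right _ _)
    have hlow := hpush (x i) p hpΓ hpd hxΓ t ht0 htr
    set z : En n := p + (t / dist (x i) p) • (x i - p) with hzdef
    have htdM : t / dist (x i) p = M := by
      rw [hdp, htdef]
      field_simp
    have hzp : z - p = M • (x i - p) := by
      rw [hzdef, htdM]; abel
    have hzpn : ‖z - p‖ = t := by
      rw [hzp, norm_smul, Real.norm_eq_abs, abs_of_pos hM0, ← dist_eq_norm, hdp, htdef]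
    have hzΓle : Metric.infDist z Γ ≤ 2 * ρ := by
      have h1 : Metric.infDist z Γ ≤ dist z p := Metric.infDist_le_dist_of_mem hpΓ
      rw [dist_eq_norm, hzpn] at h1
      linarith only [h1, ht2ρ]
    have hav := havoid i z hzΓle
    have hxz : dist (x i) z = (M - 1) * d := by
      have h1 : x i - z = (1 - M) • (x i - p) := by
        rw [hzdef, htdM]
        rw [sub_smul, one_smul]
        abel
      rw [dist_eq_norm, h1, norm_smul, Real.norm_eq_abs, ← dist_eq_norm, hdp,
        abs_of_nonpos (by linarith only [hM1])]
      ring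
    have hyd : dist (y i) 0 = y i := by
      rw [Real.dist_eq, sub_zero, abs_of_pos (hy0 i)]
    have hsq := dist_emb1_sq (x i) z (y i) 0
    have h1 : Metric.infDist z Γ ^ 2 ≤ ((M - 1) * d) ^ 2 + (y i) ^ 2 := by
      have h2 : Metric.infDist z Γ ^ 2 ≤ dist (emb1 n (x i, y i)) (emb1 n (z, 0)) ^ 2 :=
        pow_le_pow_left₀ Metric.infDist_nonneg hav 2
      rw [hsq, hxz, hyd] at h2
      exact h2
    have h2 : (M - 1 / 2) * d ≤ Metric.infDist z Γ := by
      have h3 : (1 - (2 * M)⁻¹) * t = (M - 1 / 2) * d := by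
        rw [htdef]
        field_simp
      rw [h3] at hlow
      exact hlow
    have h4 : ((M - 1 / 2) * d) ^ 2 ≤ ((M - 1) * d) ^ 2 + (y i) ^ 2 := by
      have h5 : ((M - 1 / 2) * d) ^ 2 ≤ Metric.infDist z Γ ^ 2 :=
        pow_le_pow_left₀ (mul_nonneg (by linarith only [hM1]) hd0) h2 2
      linarith only [h5, h1]
    -- extract : (M - 3/4) d² ≤ y²  with  M - 3/4 = 1/4 + ε'⁻²
    have h6 : (ε')⁻¹ * (ε')⁻¹ * (d * d) + d * d / 4 ≤ y i * y i := by
      rw [hMdef] at h4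
      nlinarith only [h4]
    have hinv : ε' * (ε')⁻¹ = 1 := mul_inv_cancel₀ hε'.ne'
    have h7 : ε' * ε' * ((ε')⁻¹ * (ε')⁻¹ * (d * d) + d * d / 4) ≤ ε' * ε' * (y i * y i) :=
      mul_le_mul_of_nonneg_left h6 (by positivity)
    have h8 : ε' * ε' * ((ε')⁻¹ * (ε')⁻¹ * (d * d)) = d * d := by
      calc ε' * ε' * ((ε')⁻¹ * (ε')⁻¹ * (d * d))
          = (ε' * (ε')⁻¹) * (ε' * (ε')⁻¹) * (d * d) := by ring
        _ = d * d := by rw [hinv]; ring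
    have h9 : d * d < ε' * ε' * (y i * y i) := by
      nlinarith only [h7, h8, mul_pos (mul_pos hε' hε') (mul_pos h0 h0)]
    rw [Real.norm_eq_abs, abs_of_nonneg (div_nonneg hd0 (hy0 i).le), div_lt_iff₀ (hy0 i)]
    nlinarith only [h9, mul_pos hε' (hy0 i), h0, hy0 i, hε']
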